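/- Assume √2·L < 1. Then there exists exactly one bounded Lebesgue-measurable function ξ : ℝ → ℝ^{m+1} with ξ = Tξ pointwise on ℝ, and this ξ belongs to Ω (this is the existence-and-uniqueness part of Theorem 1: the system admits a unique solution bounded on ℝ). -/

import Mathlib

/-- The Euclidean norm on `Fin n → ℝ`. -/
noncomputable def eNorm {n : ℕ} (v : Fin n → ℝ) : ℝ := Real.sqrt (∑ j, v j ^ 2)

/-- The operator `T` of the paper: coordinate `0` (the systemic arterial pressure) gets
`(Tφ)₀(t) = −∫_{−∞}^t e^{−k₀(t−s)} g₀(φ₀(s)−φ₁(s),…,φ₀(s)−φ_m(s)) ds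
  + Σ_{θ_i < t} e^{−k₀(t−θ_i)} (I₀ + J₀(φ₀(θ_i)))`,
and the compartment coordinates `j = 1,…,m` (nonzero indices of `Fin (m+1)`) get
`(Tφ)_j(t) = ∫_{−∞}^t e^{−k_j(t−s)} g_j(φ₀(s)−φ_j(s)) ds`. -/
noncomputable def Tmap (m : ℕ) (θ : ℤ → ℝ) (k : Fin (m + 1) → ℝ) (I₀ : ℝ)
    (g₀ : (Fin m → ℝ) → ℝ) (g : Fin (m + 1) → ℝ → ℝ) (J₀ : ℝ → ℝ)
    (φ : ℝ → Fin (m + 1) → ℝ) : ℝ → Fin (m + 1) → ℝ := fun t j =>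
  if j = 0 then
    -(∫ s in Set.Iic t, Real.exp (-(k 0) * (t - s)) * g₀ (fun i => φ s 0 - φ s i.succ))
      + ∑' i : ℤ, (if θ i < t then Real.exp (-(k 0) * (t - θ i)) * (I₀ + J₀ (φ (θ i) 0)) else 0)
  else
    ∫ s in Set.Iic t, Real.exp (-(k j) * (t - s)) * g j (φ s 0 - φ s j)

/-- The set `Ω`: bounded measurable functions `φ : ℝ → ℝ^{m+1}` with
`|φ₀(t)| ≤ m₀/k₀ + (I₀ + m_J)·e^{k₀ω}/(1 − e^{−k₀ω})` and `|φ_j(t)| ≤ m_j/k_j`. -/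
def OmegaSet (m : ℕ) (ω : ℝ) (k mc : Fin (m + 1) → ℝ) (I₀ mJ : ℝ) :
    Set (ℝ → Fin (m + 1) → ℝ) :=
  {φ | Measurable φ ∧ (∃ B, ∀ t, eNorm (φ t) ≤ B) ∧ ∀ t,
    |φ t 0| ≤ mc 0 / k 0 + (I₀ + mJ) * Real.exp (k 0 * ω) / (1 - Real.exp (-(k 0) * ω)) ∧
    ∀ j, j ≠ 0 → |φ t j| ≤ mc j / k j}


section Helpers
open MeasureTheory Set Filter Real Topology intervalIntegral

lemma eNorm_eq_norm {n : ℕ} (v : Fin n → ℝ) :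
    eNorm v = ‖(WithLp.equiv 2 (Fin n → ℝ)).symm v‖ := by
  rw [EuclideanSpace.norm_eq]
  unfold eNorm
  congr 1
  refine Finset.sum_congr rfl fun j _ => ?_
  rw [show ((WithLp.equiv 2 (Fin n → ℝ)).symm v).ofLp j = v j from rfl, Real.norm_eq_abs, sq_abs]

lemma eNorm_nonneg {n : ℕ} (v : Fin n → ℝ) : 0 ≤ eNorm v := Real.sqrt_nonneg _

lemma abs_le_eNorm {n : ℕ} (v : Fin n → ℝ) (j : Fin n) : |v j| ≤ eNorm v := by
  rw [← Real.sqrt_sq_eq_abs]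
  exact Real.sqrt_le_sqrt (Finset.single_le_sum (f := fun i => v i ^ 2)
    (fun i _ => sq_nonneg (v i)) (Finset.mem_univ j))

lemma eNorm_le_sqrt {n : ℕ} {v b : Fin n → ℝ} (h : ∀ j, |v j| ≤ b j) :
    eNorm v ≤ Real.sqrt (∑ j, b j ^ 2) := by
  apply Real.sqrt_le_sqrt
  refine Finset.sum_le_sum fun j _ => ?_
  calc v j ^ 2 = |v j| ^ 2 := (sq_abs _).symm
  _ ≤ b j ^ 2 := by
      have := h j
      have := abs_nonneg (v j)
      nlinarith

lemma eNorm_sub_comm {n : ℕ} (a b : Fin n → ℝ) :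
    eNorm (fun j => a j - b j) = eNorm (fun j => b j - a j) := by
  rw [show (fun j => a j - b j) = a - b from rfl, show (fun j => b j - a j) = b - a from rfl,
    eNorm_eq_norm, eNorm_eq_norm, WithLp.equiv_symm_apply, WithLp.toLp_sub, WithLp.toLp_sub, norm_sub_rev]

lemma eNorm_sub_triangle {n : ℕ} (a b c : Fin n → ℝ) :
    eNorm (fun j => a j - c j) ≤ eNorm (fun j => a j - b j) + eNorm (fun j => b j - c j) := by
  rw [show (fun j => a j - c j) = a - c from rfl, show (fun j => a j - b j) = a - b from rfl,
    show (fun j => b j - c j) = b - c from rfl, eNorm_eq_norm, eNorm_eq_norm, eNorm_eq_norm,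
    WithLp.equiv_symm_apply, WithLp.toLp_sub, WithLp.toLp_sub, WithLp.toLp_sub]
  exact norm_sub_le_norm_sub_add_norm_sub _ _ _

lemma eNorm_sub_le_add {n : ℕ} (a b : Fin n → ℝ) :
    eNorm (fun j => a j - b j) ≤ eNorm a + eNorm b := by
  rw [show (fun j => a j - b j) = a - b from rfl, eNorm_eq_norm, eNorm_eq_norm, eNorm_eq_norm,
    WithLp.equiv_symm_apply, WithLp.toLp_sub]
  exact norm_sub_le _ _

lemma eNorm_eq_zero {n : ℕ} {v : Fin n → ℝ} (h : eNorm v = 0) : ∀ j, v j = 0 := by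
  rw [eNorm_eq_norm, norm_eq_zero] at h
  intro j
  have : (WithLp.equiv 2 (Fin n → ℝ)).symm v j = v j := rfl
  rw [← this, h]
  rfl

lemma norm_le_eNorm {n : ℕ} (v : Fin n → ℝ) : ‖v‖ ≤ eNorm v :=
  (pi_norm_le_iff_of_nonneg (eNorm_nonneg v)).2 fun j => by
    rw [Real.norm_eq_abs]; exact abs_le_eNorm v j

lemma eNorm_le_card_norm {n : ℕ} (v : Fin n → ℝ) : eNorm v ≤ Real.sqrt n * ‖v‖ := by
  calc eNorm v ≤ Real.sqrt (∑ _j : Fin n, ‖v‖ ^ 2) :=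
        eNorm_le_sqrt fun j => by rw [← Real.norm_eq_abs]; exact norm_le_pi_norm v j
  _ = Real.sqrt n * ‖v‖ := by
      rw [Finset.sum_const, Finset.card_univ, Fintype.card_fin, nsmul_eq_mul,
        Real.sqrt_mul (by positivity), Real.sqrt_sq (norm_nonneg _)]

lemma abs_sub_le_sqrt_two_eNorm {n : ℕ} (v : Fin n → ℝ) {j0 j : Fin n} (hne : j0 ≠ j) :
    |v j0 - v j| ≤ Real.sqrt 2 * eNorm v := by
  have h0 : v j0 ^ 2 + v j ^ 2 ≤ ∑ i, v i ^ 2 := by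
    have hp := Finset.sum_pair (f := fun i => v i ^ 2) hne
    rw [← hp]
    exact Finset.sum_le_sum_of_subset_of_nonneg (Finset.subset_univ _)
      (fun i _ _ => sq_nonneg _)
  have h1 : (v j0 - v j) ^ 2 ≤ 2 * ∑ i, v i ^ 2 := by nlinarith [sq_nonneg (v j0 + v j)]
  calc |v j0 - v j| = Real.sqrt ((v j0 - v j) ^ 2) := (Real.sqrt_sq_eq_abs _).symm
  _ ≤ Real.sqrt (2 * ∑ i, v i ^ 2) := Real.sqrt_le_sqrt h1
  _ = Real.sqrt 2 * eNorm v := by rw [Real.sqrt_mul (by norm_num)]; rfl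

lemma z_estimate {m : ℕ} (hm : 1 ≤ m) (v : Fin (m + 1) → ℝ) :
    eNorm (fun i : Fin m => v 0 - v i.succ) ≤ Real.sqrt (2 * m) * eNorm v := by
  have h1 : ∑ i : Fin m, (v 0 - v i.succ) ^ 2 ≤
      ∑ i : Fin m, (2 * v 0 ^ 2 + 2 * v i.succ ^ 2) :=
    Finset.sum_le_sum fun i _ => by nlinarith [sq_nonneg (v 0 + v i.succ)]
  have h2 : ∑ i : Fin m, (2 * v 0 ^ 2 + 2 * v i.succ ^ 2) =
      2 * m * v 0 ^ 2 + 2 * ∑ i : Fin m, v i.succ ^ 2 := by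
    rw [Finset.sum_add_distrib, Finset.sum_const, Finset.card_univ, Fintype.card_fin,
      nsmul_eq_mul, ← Finset.mul_sum]
    ring
  have h3 : ∑ j : Fin (m + 1), v j ^ 2 = v 0 ^ 2 + ∑ i : Fin m, v i.succ ^ 2 :=
    Fin.sum_univ_succ _
  have h4 : (0 : ℝ) ≤ ∑ i : Fin m, v i.succ ^ 2 := Finset.sum_nonneg fun i _ => sq_nonneg _
  have hm' : (1 : ℝ) ≤ m := by exact_mod_cast hm
  have key : ∑ i : Fin m, (v 0 - v i.succ) ^ 2 ≤ 2 * m * ∑ j : Fin (m + 1), v j ^ 2 := by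
    rw [h3]
    nlinarith [sq_nonneg (v 0)]
  calc eNorm (fun i : Fin m => v 0 - v i.succ)
      ≤ Real.sqrt (2 * m * ∑ j : Fin (m + 1), v j ^ 2) := Real.sqrt_le_sqrt key
  _ = Real.sqrt (2 * m) * eNorm v := by rw [Real.sqrt_mul (by positivity)]; rfl

lemma intervalIntegral_exp_mul {kk : ℝ} (hk : kk ≠ 0) (a b : ℝ) :
    ∫ x in a..b, Real.exp (kk * x) = (Real.exp (kk * b) - Real.exp (kk * a)) / kk := by
  have h := intervalIntegral.mul_integral_comp_mul_left (a := a) (b := b) (f := Real.exp) kk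
  rw [integral_exp] at h
  rw [eq_div_iff hk, mul_comm]
  exact h

lemma expInt_integrable {kk : ℝ} (hk : 0 < kk) {h : ℝ → ℝ} (hmeas : Measurable h)
    {C : ℝ} (hC : ∀ s, |h s| ≤ C) (t : ℝ) :
    IntegrableOn (fun s => Real.exp (-kk * (t - s)) * h s) (Iic t) := by
  have hint : IntegrableOn (fun s => C * Real.exp (-kk * t) * Real.exp (kk * s)) (Iic t) :=
    (integrableOn_exp_mul_Iic hk t).const_mul _
  refine Integrable.mono' hint ?_ (ae_of_all _ fun s => ?_)
  · exact ((Real.measurable_exp.comp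
      ((measurable_const.sub measurable_id).const_mul (-kk))).mul hmeas).aestronglyMeasurable
  · have e1 : Real.exp (-kk * (t - s)) = Real.exp (-kk * t) * Real.exp (kk * s) := by
      rw [← Real.exp_add]; ring_nf
    rw [Real.norm_eq_abs, abs_mul, abs_of_pos (Real.exp_pos _), e1]
    have h2 := hC s
    have h3 := (Real.exp_pos (-kk * t)).le
    have h4 := (Real.exp_pos (kk * s)).le
    have h5 := abs_nonneg (h s)
    nlinarith [mul_le_mul_of_nonneg_left h2 (mul_nonneg h3 h4)]

lemma expInt_bound {kk : ℝ} (hk : 0 < kk) {h : ℝ → ℝ} (hmeas : Measurable h)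
    {C : ℝ} (hC : ∀ s, |h s| ≤ C) (t : ℝ) :
    |∫ s in Iic t, Real.exp (-kk * (t - s)) * h s| ≤ C / kk := by
  have hint : IntegrableOn (fun s => C * Real.exp (-kk * t) * Real.exp (kk * s)) (Iic t) :=
    (integrableOn_exp_mul_Iic hk t).const_mul _
  have h1 : ‖∫ s in Iic t, Real.exp (-kk * (t - s)) * h s‖ ≤
      ∫ s in Iic t, C * Real.exp (-kk * t) * Real.exp (kk * s) := by
    refine norm_integral_le_of_norm_le hint (ae_of_all _ fun s => ?_)
    have e1 : Real.exp (-kk * (t - s)) = Real.exp (-kk * t) * Real.exp (kk * s) := by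
      rw [← Real.exp_add]; ring_nf
    rw [Real.norm_eq_abs, abs_mul, abs_of_pos (Real.exp_pos _), e1]
    have h2 := hC s
    have h3 := (Real.exp_pos (-kk * t)).le
    have h4 := (Real.exp_pos (kk * s)).le
    have h5 := abs_nonneg (h s)
    nlinarith [mul_le_mul_of_nonneg_left h2 (mul_nonneg h3 h4)]
  rw [Real.norm_eq_abs] at h1
  refine h1.trans ?_
  rw [MeasureTheory.integral_const_mul, integral_exp_mul_Iic hk t]
  rw [show C * Real.exp (-kk * t) * (Real.exp (kk * t) / kk)
      = C * (Real.exp (-kk * t) * Real.exp (kk * t)) / kk by ring, ← Real.exp_add]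
  simp

lemma expInt_measurable {kk : ℝ} (hk : 0 < kk) {h : ℝ → ℝ} (hmeas : Measurable h)
    {C : ℝ} (hC : ∀ s, |h s| ≤ C) :
    Measurable (fun t => ∫ s in Iic t, Real.exp (-kk * (t - s)) * h s) := by
  have hGint : ∀ u : ℝ, IntegrableOn (fun s => Real.exp (kk * s) * h s) (Iic u) := by
    intro u
    have h0 : IntegrableOn (fun s => Real.exp (kk * u) * (Real.exp (-kk * (u - s)) * h s))
        (Iic u) := (expInt_integrable hk hmeas hC u).const_mul (Real.exp (kk * u))
    refine IntegrableOn.congr_fun h0 (fun s _ => ?_) measurableSet_Iic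
    rw [← mul_assoc, ← Real.exp_add]
    ring_nf
  have hII : ∀ a b : ℝ, IntervalIntegrable (fun s => Real.exp (kk * s) * h s) volume a b := by
    intro a b
    refine IntegrableOn.intervalIntegrable ?_
    refine (hGint (max a b)).mono_set ?_
    intro x hx
    exact le_trans hx.2 (le_refl _)
  set G : ℝ → ℝ := fun u => ∫ s in Iic u, Real.exp (kk * s) * h s with hGdef
  have hGc : Continuous G := by
    have hc : Continuous fun u : ℝ => ∫ x in (0 : ℝ)..u, Real.exp (kk * x) * h x :=
      intervalIntegral.continuous_primitive hII 0
    have : G = fun u => G 0 + ∫ x in (0 : ℝ)..u, Real.exp (kk * x) * h x := by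
      funext u
      have := integral_Iic_sub_Iic (hGint 0) (hGint u)
      simp only [hGdef]
      linarith [this]
    rw [this]
    exact continuous_const.add hc
  have heq : (fun t => ∫ s in Iic t, Real.exp (-kk * (t - s)) * h s)
      = fun t => Real.exp (-kk * t) * G t := by
    funext t
    rw [hGdef, ← MeasureTheory.integral_const_mul]
    refine setIntegral_congr_fun measurableSet_Iic fun s _ => ?_
    rw [← mul_assoc, ← Real.exp_add]
    ring_nf
  rw [heq]
  exact ((Real.continuous_exp.comp (continuous_const.mul continuous_id)).mul hGc).measurable

lemma sum_summable_bound {ω : ℝ} (hω : 0 < ω) {θ : ℤ → ℝ}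
    (hθ : ∀ i : ℤ, (i : ℝ) * ω ≤ θ i ∧ θ i < ((i : ℝ) + 1) * ω)
    {kk : ℝ} (hk : 0 < kk) (t : ℝ) (w : ℤ → ℝ) {C : ℝ} (hw : ∀ i, |w i| ≤ C) :
    Summable (fun i : ℤ => if θ i < t then Real.exp (-kk * (t - θ i)) * w i else 0) ∧
    |∑' i : ℤ, if θ i < t then Real.exp (-kk * (t - θ i)) * w i else 0| ≤
      C * (Real.exp (kk * ω) / (1 - Real.exp (-kk * ω))) := by
  classical
  set F : ℤ → ℝ := fun i => if θ i < t then Real.exp (-kk * (t - θ i)) * w i else 0 with hF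
  set N : ℤ := ⌊t / ω⌋ with hN
  set e : ℕ → ℤ := fun n => N - n with he
  have hinj : Function.Injective e := by
    intro a b hab
    simp only [he] at hab
    omega
  have hNt : (N : ℝ) * ω ≤ t := by
    have h1 := Int.floor_le (t / ω)
    have h2 := mul_le_mul_of_nonneg_right h1 hω.le
    rwa [div_mul_cancel₀ t hω.ne'] at h2
  have htN : t < ((N : ℝ) + 1) * ω := by
    have h1 := Int.lt_floor_add_one (t / ω)
    have h2 := mul_lt_mul_of_pos_right h1 hω
    rw [div_mul_cancel₀ t hω.ne'] at h2
    exact_mod_cast h2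
  have hsupp : ∀ i ∉ Set.range e, F i = 0 := by
    intro i hi
    have hiN : N < i := by
      by_contra hle
      push_neg at hle
      exact hi ⟨(N - i).toNat, by simp only [he]; omega⟩
    have hnot : ¬ θ i < t := by
      push_neg
      have h1 : ((N : ℝ) + 1) ≤ (i : ℝ) := by exact_mod_cast hiN
      have h2 : ((N : ℝ) + 1) * ω ≤ (i : ℝ) * ω := mul_le_mul_of_nonneg_right h1 hω.le
      linarith [(hθ i).1]
    simp [hF, hnot]
  have hC0 : 0 ≤ C := (abs_nonneg _).trans (hw 0)
  set r : ℝ := Real.exp (-kk * ω) with hr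
  have hr0 : 0 ≤ r := (Real.exp_pos _).le
  have hr1 : r < 1 := by
    rw [hr, Real.exp_lt_one_iff]
    nlinarith
  set D : ℝ := C * Real.exp (kk * ω) with hD
  have hD0 : 0 ≤ D := mul_nonneg hC0 (Real.exp_pos _).le
  have hb : ∀ n : ℕ, ‖F (e n)‖ ≤ D * r ^ n := by
    intro n
    by_cases hcase : θ (e n) < t
    · have h1 : |F (e n)| = Real.exp (-kk * (t - θ (e n))) * |w (e n)| := by
        rw [hF]
        simp only [if_pos hcase]
        rw [abs_mul, abs_of_pos (Real.exp_pos _)]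
      have h2 : θ (e n) < ((N : ℝ) - n + 1) * ω := by
        have h0 := (hθ (e n)).2
        have hcast : ((e n : ℤ) : ℝ) = (N : ℝ) - n := by
          simp only [he]
          push_cast
          ring
        rwa [hcast] at h0
      have h3 : -kk * (t - θ (e n)) ≤ kk * ω + (n : ℕ) * (-kk * ω) := by
        have hn0 : (0 : ℝ) ≤ (n : ℝ) := Nat.cast_nonneg n
        have hstep : (n : ℝ) * ω - ω ≤ t - θ (e n) := by nlinarith
        nlinarith
      have h4 : Real.exp (-kk * (t - θ (e n))) ≤ Real.exp (kk * ω) * r ^ n := by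
        have := Real.exp_le_exp.2 h3
        rwa [Real.exp_add, Real.exp_nat_mul] at this
      rw [Real.norm_eq_abs, h1]
      calc Real.exp (-kk * (t - θ (e n))) * |w (e n)|
          ≤ (Real.exp (kk * ω) * r ^ n) * C := by
            refine mul_le_mul h4 (hw _) (abs_nonneg _) ?_
            positivity
      _ = D * r ^ n := by rw [hD]; ring
    · rw [hF]
      simp only [if_neg hcase, norm_zero]
      positivity
  have hgs : Summable (fun n : ℕ => D * r ^ n) :=
    (summable_geometric_of_lt_one hr0 hr1).mul_left D
  have hFe : Summable (F ∘ e) := Summable.of_norm_bounded hgs hb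
  have hFsum : Summable F := (hinj.summable_iff hsupp).1 hFe
  refine ⟨hFsum, ?_⟩
  have htsum : ∑' i, F i = ∑' n, F (e n) :=
    (hinj.tsum_eq (by
      intro x hx
      by_contra hmem
      exact hx (hsupp x hmem))).symm
  have hnorm : Summable fun n => ‖F (e n)‖ :=
    Summable.of_nonneg_of_le (fun _ => norm_nonneg _) hb hgs
  have hfinal : |∑' n, F (e n)| ≤ D * (1 - r)⁻¹ := by
    calc |∑' n, F (e n)| ≤ ∑' n, ‖F (e n)‖ := by
          rw [← Real.norm_eq_abs]
          exact norm_tsum_le_tsum_norm hnorm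
    _ ≤ ∑' n, D * r ^ n := Summable.tsum_le_tsum hb hnorm hgs
    _ = D * (1 - r)⁻¹ := by rw [tsum_mul_left, tsum_geometric_of_lt_one hr0 hr1]
  rw [htsum]
  refine hfinal.trans ?_
  rw [hD]
  rw [div_eq_mul_inv]
  ring_nf
  exact le_refl _

lemma sum_measurable {ω : ℝ} (hω : 0 < ω) {θ : ℤ → ℝ}
    (hθ : ∀ i : ℤ, (i : ℝ) * ω ≤ θ i ∧ θ i < ((i : ℝ) + 1) * ω)
    {kk : ℝ} (hk : 0 < kk) (w : ℤ → ℝ) {C : ℝ} (hw : ∀ i, |w i| ≤ C) :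
    Measurable (fun t => ∑' i : ℤ, if θ i < t then Real.exp (-kk * (t - θ i)) * w i else 0) := by
  set u : ℤ → ℝ → ℝ := fun i t => if θ i < t then Real.exp (-kk * (t - θ i)) * w i else 0
    with hu
  have hum : ∀ i, Measurable (u i) := by
    intro i
    have h1 : Measurable fun t => Real.exp (-kk * (t - θ i)) * w i :=
      (Real.measurable_exp.comp
        ((measurable_id.sub measurable_const).const_mul (-kk))).mul_const _
    exact Measurable.ite measurableSet_Ioi h1 measurable_const
  have hP : ∀ n : ℕ, Measurable (fun t => ∑ i ∈ Finset.Icc (-(n : ℤ)) n, u i t) :=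
    fun n => Finset.measurable_sum _ (fun i _ => hum i)
  apply measurable_of_tendsto_metrizable hP
  rw [tendsto_pi_nhds]
  intro t
  have hs : Summable (fun i => u i t) := (sum_summable_bound hω hθ hk t w hw).1
  have hmono : Monotone (fun n : ℕ => Finset.Icc (-(n : ℤ)) n) := by
    intro a b hab
    apply Finset.Icc_subset_Icc <;> omega
  have htend : Tendsto (fun n : ℕ => Finset.Icc (-(n : ℤ)) n) atTop atTop :=
    tendsto_atTop_finset_of_monotone hmono (fun i => ⟨i.natAbs, by
      simp only [Finset.mem_Icc]; omega⟩)
  exact hs.hasSum.comp htend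

end Helpers

/-- Assume `√2·L < 1`. Then there exists exactly one bounded measurable
`ξ : ℝ → ℝ^{m+1}` with `ξ = Tξ` pointwise on `ℝ`, and this `ξ` belongs to `Ω`
(existence-and-uniqueness part of Theorem 1). -/
theorem stmt4
    (m : ℕ) (hm : 1 ≤ m) (ω : ℝ) (hω : 0 < ω) (θ : ℤ → ℝ)
    (hθ : ∀ i : ℤ, (i : ℝ) * ω ≤ θ i ∧ θ i < ((i : ℝ) + 1) * ω)
    (k : Fin (m + 1) → ℝ) (hk : ∀ j, 0 < k j) (I₀ : ℝ) (hI : 0 < I₀)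
    (g₀ : (Fin m → ℝ) → ℝ) (g : Fin (m + 1) → ℝ → ℝ) (J₀ : ℝ → ℝ)
    (l : Fin (m + 1) → ℝ) (lJ : ℝ) (mc : Fin (m + 1) → ℝ) (mJ : ℝ)
    (hl : ∀ j, 0 ≤ l j) (hlJ : 0 ≤ lJ) (hmc : ∀ j, 0 ≤ mc j) (hmJ : 0 ≤ mJ)
    (hg₀lip : ∀ z w : Fin m → ℝ, |g₀ z - g₀ w| ≤ l 0 * eNorm (fun i => z i - w i))
    (hglip : ∀ j, j ≠ 0 → ∀ a b : ℝ, |g j a - g j b| ≤ l j * |a - b|)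
    (hJlip : ∀ a b : ℝ, |J₀ a - J₀ b| ≤ lJ * |a - b|)
    (hg₀bd : ∀ z, |g₀ z| ≤ mc 0)
    (hgbd : ∀ j, j ≠ 0 → ∀ a, |g j a| ≤ mc j)
    (hJbd : ∀ a, |J₀ a| ≤ mJ)
    (hL : Real.sqrt 2 * Real.sqrt ((l 0 * Real.sqrt (2 * m) / k 0 + lJ * Real.exp (k 0 * ω) / (1 - Real.exp (-(k 0) * ω))) ^ 2 + ∑ i : Fin m, (l i.succ / k i.succ) ^ 2) < 1) :
    ∃ ξ : ℝ → Fin (m + 1) → ℝ,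
      (Measurable ξ ∧ (∃ B, ∀ t, eNorm (ξ t) ≤ B) ∧ ∀ t, ξ t = Tmap m θ k I₀ g₀ g J₀ ξ t) ∧
      ξ ∈ OmegaSet m ω k mc I₀ mJ ∧
      ∀ ζ : ℝ → Fin (m + 1) → ℝ,
        (Measurable ζ ∧ (∃ B, ∀ t, eNorm (ζ t) ≤ B) ∧ ∀ t, ζ t = Tmap m θ k I₀ g₀ g J₀ ζ t) →
        ζ = ξ := by
  classical
  -- abbreviations for the contraction constant
  set A₀ : ℝ := l 0 * Real.sqrt (2 * m) / k 0 +
      lJ * Real.exp (k 0 * ω) / (1 - Real.exp (-(k 0) * ω)) with hA₀def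
  set SS : ℝ := ∑ i : Fin m, (l i.succ / k i.succ) ^ 2 with hSSdef
  set c : ℝ := Real.sqrt 2 * Real.sqrt (A₀ ^ 2 + SS) with hcdef
  have hSS0 : 0 ≤ SS := by
    rw [hSSdef]; exact Finset.sum_nonneg fun i _ => sq_nonneg _
  have hc1 : c < 1 := hL
  have hc0 : 0 ≤ c := mul_nonneg (Real.sqrt_nonneg _) (Real.sqrt_nonneg _)
  -- continuity / measurability of the nonlinearities
  have hg₀cont : Continuous g₀ := by
    have hlip : LipschitzWith (Real.toNNReal (l 0 * Real.sqrt m)) g₀ := by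
      apply LipschitzWith.of_dist_le_mul
      intro x y
      rw [Real.dist_eq, dist_eq_norm]
      have h1 : |g₀ x - g₀ y| ≤ l 0 * eNorm (fun i => x i - y i) := hg₀lip x y
      have h2 : eNorm (fun i => x i - y i) ≤ Real.sqrt m * ‖x - y‖ := eNorm_le_card_norm (x - y)
      have h3 : l 0 * eNorm (fun i => x i - y i) ≤ l 0 * Real.sqrt m * ‖x - y‖ := by
        rw [mul_assoc]
        exact mul_le_mul_of_nonneg_left h2 (hl 0)
      refine h1.trans (h3.trans ?_)
      exact mul_le_mul_of_nonneg_right (Real.le_coe_toNNReal _) (norm_nonneg _)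
    exact hlip.continuous
  have hgcont : ∀ j, j ≠ 0 → Continuous (g j) := by
    intro j hj
    have hlip : LipschitzWith (Real.toNNReal (l j)) (g j) := by
      apply LipschitzWith.of_dist_le_mul
      intro x y
      rw [Real.dist_eq, Real.dist_eq]
      exact (hglip j hj x y).trans
        (mul_le_mul_of_nonneg_right (Real.le_coe_toNNReal _) (abs_nonneg _))
    exact hlip.continuous
  have hJcont : Continuous J₀ := by
    have hlip : LipschitzWith (Real.toNNReal lJ) J₀ := by
      apply LipschitzWith.of_dist_le_mul
      intro x y
      rw [Real.dist_eq, Real.dist_eq]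
      exact (hJlip x y).trans
        (mul_le_mul_of_nonneg_right (Real.le_coe_toNNReal _) (abs_nonneg _))
    exact hlip.continuous
  have hmeas0 : ∀ φ : ℝ → Fin (m + 1) → ℝ, Measurable φ →
      Measurable (fun s => g₀ (fun i => φ s 0 - φ s i.succ)) := by
    intro φ hφ
    exact hg₀cont.measurable.comp (measurable_pi_lambda _ fun i =>
      ((measurable_pi_apply 0).comp hφ).sub ((measurable_pi_apply i.succ).comp hφ))
  have hmeasj : ∀ φ : ℝ → Fin (m + 1) → ℝ, Measurable φ → ∀ j : Fin (m + 1), j ≠ 0 →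
      Measurable (fun s => g j (φ s 0 - φ s j)) := by
    intro φ hφ j hj
    exact (hgcont j hj).measurable.comp
      (((measurable_pi_apply 0).comp hφ).sub ((measurable_pi_apply j).comp hφ))
  have hsumw : ∀ φ : ℝ → Fin (m + 1) → ℝ, ∀ i : ℤ, |I₀ + J₀ (φ (θ i) 0)| ≤ I₀ + mJ := by
    intro φ i
    refine (abs_add_le _ _).trans ?_
    rw [abs_of_pos hI]
    exact add_le_add_right (hJbd _) I₀
  -- unfolding Tmap
  have hunf0 : ∀ (φ : ℝ → Fin (m + 1) → ℝ) (t : ℝ), Tmap m θ k I₀ g₀ g J₀ φ t 0 =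
      -(∫ s in Set.Iic t, Real.exp (-(k 0) * (t - s)) * g₀ (fun i => φ s 0 - φ s i.succ))
      + ∑' i : ℤ, (if θ i < t then Real.exp (-(k 0) * (t - θ i)) * (I₀ + J₀ (φ (θ i) 0))
          else 0) := by
    intro φ t
    simp only [Tmap, if_pos]
  have hunfj : ∀ (φ : ℝ → Fin (m + 1) → ℝ) (t : ℝ) (j : Fin (m + 1)), j ≠ 0 →
      Tmap m θ k I₀ g₀ g J₀ φ t j =
      ∫ s in Set.Iic t, Real.exp (-(k j) * (t - s)) * g j (φ s 0 - φ s j) := by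
    intro φ t j hj
    simp only [Tmap, if_neg hj]
  -- measurability of Tmap φ
  have hTmeas : ∀ φ : ℝ → Fin (m + 1) → ℝ, Measurable φ →
      Measurable (Tmap m θ k I₀ g₀ g J₀ φ) := by
    intro φ hφ
    rw [measurable_pi_iff]
    intro j
    by_cases hj : j = 0
    · subst hj
      have heq : (fun t => Tmap m θ k I₀ g₀ g J₀ φ t 0) = fun t =>
          -(∫ s in Set.Iic t, Real.exp (-(k 0) * (t - s)) * g₀ (fun i => φ s 0 - φ s i.succ))
          + ∑' i : ℤ, (if θ i < t then Real.exp (-(k 0) * (t - θ i)) * (I₀ + J₀ (φ (θ i) 0))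
              else 0) := by
        funext t; exact hunf0 φ t
      rw [heq]
      exact ((expInt_measurable (hk 0) (hmeas0 φ hφ) (fun s => hg₀bd _)).neg).add
        (sum_measurable hω hθ (hk 0) (fun i => I₀ + J₀ (φ (θ i) 0)) (hsumw φ))
    · have heq : (fun t => Tmap m θ k I₀ g₀ g J₀ φ t j) = fun t =>
          ∫ s in Set.Iic t, Real.exp (-(k j) * (t - s)) * g j (φ s 0 - φ s j) := by
        funext t; exact hunfj φ t j hj
      rw [heq]
      exact expInt_measurable (hk j) (hmeasj φ hφ j hj) (fun s => hgbd j hj _)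
  -- pointwise bounds of Tmap φ
  have hTbd : ∀ φ : ℝ → Fin (m + 1) → ℝ, Measurable φ → ∀ t : ℝ,
      |Tmap m θ k I₀ g₀ g J₀ φ t 0| ≤
        mc 0 / k 0 + (I₀ + mJ) * Real.exp (k 0 * ω) / (1 - Real.exp (-(k 0) * ω)) ∧
      ∀ j, j ≠ 0 → |Tmap m θ k I₀ g₀ g J₀ φ t j| ≤ mc j / k j := by
    intro φ hφ t
    constructor
    · have hInt := expInt_bound (hk 0) (hmeas0 φ hφ) (fun s => hg₀bd _) t
      have hSum := (sum_summable_bound hω hθ (hk 0) t _ (hsumw φ)).2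
      rw [hunf0 φ t]
      have habs := abs_add_le
        (-(∫ s in Set.Iic t, Real.exp (-(k 0) * (t - s)) * g₀ (fun i => φ s 0 - φ s i.succ)))
        (∑' i : ℤ, (if θ i < t then Real.exp (-(k 0) * (t - θ i)) * (I₀ + J₀ (φ (θ i) 0))
            else 0))
      rw [abs_neg] at habs
      have hrw : (I₀ + mJ) * (Real.exp (k 0 * ω) / (1 - Real.exp (-(k 0) * ω)))
          = (I₀ + mJ) * Real.exp (k 0 * ω) / (1 - Real.exp (-(k 0) * ω)) := by ring
      rw [hrw] at hSum
      linarith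
    · intro j hj
      rw [hunfj φ t j hj]
      exact expInt_bound (hk j) (hmeasj φ hφ j hj) (fun s => hgbd j hj _) t
  -- the contraction estimate
  have hcontr : ∀ φ ψ : ℝ → Fin (m + 1) → ℝ, Measurable φ → Measurable ψ →
      ∀ d : ℝ, 0 ≤ d → (∀ s, eNorm (fun j => φ s j - ψ s j) ≤ d) → ∀ t : ℝ,
      eNorm (fun j => Tmap m θ k I₀ g₀ g J₀ φ t j - Tmap m θ k I₀ g₀ g J₀ ψ t j) ≤ c * d := by
    intro φ ψ hφ hψ d hd hdist t
    -- coordinate 0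
    have hcoord0 : |Tmap m θ k I₀ g₀ g J₀ φ t 0 - Tmap m θ k I₀ g₀ g J₀ ψ t 0| ≤ A₀ * d := by
      have hintφ := expInt_integrable (hk 0) (hmeas0 φ hφ) (fun s => hg₀bd _) t
      have hintψ := expInt_integrable (hk 0) (hmeas0 ψ hψ) (fun s => hg₀bd _) t
      have hsφ := (sum_summable_bound hω hθ (hk 0) t _ (hsumw φ)).1
      have hsψ := (sum_summable_bound hω hθ (hk 0) t _ (hsumw ψ)).1
      have hdiffmeas : Measurable (fun s =>
          g₀ (fun i => φ s 0 - φ s i.succ) - g₀ (fun i => ψ s 0 - ψ s i.succ)) :=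
        (hmeas0 φ hφ).sub (hmeas0 ψ hψ)
      have hdiffbd : ∀ s, |g₀ (fun i => φ s 0 - φ s i.succ) - g₀ (fun i => ψ s 0 - ψ s i.succ)|
          ≤ l 0 * Real.sqrt (2 * m) * d := by
        intro s
        have h1 := hg₀lip (fun i => φ s 0 - φ s i.succ) (fun i => ψ s 0 - ψ s i.succ)
        have h2 : (fun i : Fin m => (φ s 0 - φ s i.succ) - (ψ s 0 - ψ s i.succ))
            = fun i : Fin m => (fun j => φ s j - ψ s j) 0 - (fun j => φ s j - ψ s j) i.succ := by
          funext i; ring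
        rw [h2] at h1
        have h3 := z_estimate hm (fun j => φ s j - ψ s j)
        have h4 := hdist s
        calc |g₀ (fun i => φ s 0 - φ s i.succ) - g₀ (fun i => ψ s 0 - ψ s i.succ)|
            ≤ l 0 * eNorm (fun i : Fin m =>
              (fun j => φ s j - ψ s j) 0 - (fun j => φ s j - ψ s j) i.succ) := h1
        _ ≤ l 0 * (Real.sqrt (2 * m) * d) := by
            refine mul_le_mul_of_nonneg_left (h3.trans ?_) (hl 0)
            exact mul_le_mul_of_nonneg_left h4 (Real.sqrt_nonneg _)
        _ = l 0 * Real.sqrt (2 * m) * d := by ring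
      have hintdiff := expInt_bound (hk 0) hdiffmeas hdiffbd t
      have hIdiff : (∫ s in Set.Iic t,
            Real.exp (-(k 0) * (t - s)) * g₀ (fun i => φ s 0 - φ s i.succ)) -
          (∫ s in Set.Iic t,
            Real.exp (-(k 0) * (t - s)) * g₀ (fun i => ψ s 0 - ψ s i.succ)) =
          ∫ s in Set.Iic t, Real.exp (-(k 0) * (t - s)) *
            (g₀ (fun i => φ s 0 - φ s i.succ) - g₀ (fun i => ψ s 0 - ψ s i.succ)) := by
        rw [← MeasureTheory.integral_sub hintφ hintψ]
        refine MeasureTheory.setIntegral_congr_fun measurableSet_Iic fun s _ => ?_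
        ring
      have hwdiff : ∀ i : ℤ, |J₀ (φ (θ i) 0) - J₀ (ψ (θ i) 0)| ≤ lJ * d := by
        intro i
        have h1 := hJlip (φ (θ i) 0) (ψ (θ i) 0)
        have h2 : |φ (θ i) 0 - ψ (θ i) 0| ≤ d :=
          (abs_le_eNorm (fun j => φ (θ i) j - ψ (θ i) j) 0).trans (hdist (θ i))
        exact h1.trans (mul_le_mul_of_nonneg_left h2 hlJ)
      have hSd := sum_summable_bound hω hθ (hk 0) t
        (fun i => J₀ (φ (θ i) 0) - J₀ (ψ (θ i) 0)) hwdiff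
      have hSdiff : (∑' i : ℤ, (if θ i < t then
            Real.exp (-(k 0) * (t - θ i)) * (I₀ + J₀ (φ (θ i) 0)) else 0)) -
          (∑' i : ℤ, (if θ i < t then
            Real.exp (-(k 0) * (t - θ i)) * (I₀ + J₀ (ψ (θ i) 0)) else 0)) =
          ∑' i : ℤ, (if θ i < t then
            Real.exp (-(k 0) * (t - θ i)) * (J₀ (φ (θ i) 0) - J₀ (ψ (θ i) 0)) else 0) := by
        rw [← Summable.tsum_sub hsφ hsψ]
        refine tsum_congr fun i => ?_
        by_cases hi : θ i < t
        · simp only [if_pos hi]; ring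
        · simp only [if_neg hi]; ring
      rw [hunf0 φ t, hunf0 ψ t]
      have hIb : |(∫ s in Set.Iic t,
            Real.exp (-(k 0) * (t - s)) * g₀ (fun i => φ s 0 - φ s i.succ)) -
          (∫ s in Set.Iic t,
            Real.exp (-(k 0) * (t - s)) * g₀ (fun i => ψ s 0 - ψ s i.succ))|
          ≤ l 0 * Real.sqrt (2 * m) * d / k 0 := by
        rw [hIdiff]; exact hintdiff
      have hSb : |(∑' i : ℤ, (if θ i < t then
            Real.exp (-(k 0) * (t - θ i)) * (I₀ + J₀ (φ (θ i) 0)) else 0)) -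
          (∑' i : ℤ, (if θ i < t then
            Real.exp (-(k 0) * (t - θ i)) * (I₀ + J₀ (ψ (θ i) 0)) else 0))|
          ≤ lJ * d * (Real.exp (k 0 * ω) / (1 - Real.exp (-(k 0) * ω))) := by
        rw [hSdiff]; exact hSd.2
      set Iφ := ∫ s in Set.Iic t,
        Real.exp (-(k 0) * (t - s)) * g₀ (fun i => φ s 0 - φ s i.succ) with hIφ
      set Iψ := ∫ s in Set.Iic t,
        Real.exp (-(k 0) * (t - s)) * g₀ (fun i => ψ s 0 - ψ s i.succ) with hIψ
      set Sφ := ∑' i : ℤ, (if θ i < t then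
        Real.exp (-(k 0) * (t - θ i)) * (I₀ + J₀ (φ (θ i) 0)) else 0) with hSφ2
      set Sψ := ∑' i : ℤ, (if θ i < t then
        Real.exp (-(k 0) * (t - θ i)) * (I₀ + J₀ (ψ (θ i) 0)) else 0) with hSψ2
      have habs1 : |(-Iφ + Sφ) - (-Iψ + Sψ)| ≤ |Iφ - Iψ| + |Sφ - Sψ| := by
        have := abs_add_le (Iψ - Iφ) (Sφ - Sψ)
        have he : (-Iφ + Sφ) - (-Iψ + Sψ) = (Iψ - Iφ) + (Sφ - Sψ) := by ring
        rw [he]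
        rw [abs_sub_comm Iψ Iφ] at this
        exact this
      refine habs1.trans ?_
      have hfin : l 0 * Real.sqrt (2 * m) * d / k 0 +
          lJ * d * (Real.exp (k 0 * ω) / (1 - Real.exp (-(k 0) * ω))) = A₀ * d := by
        rw [hA₀def]; ring
      exact (add_le_add hIb hSb).trans (le_of_eq hfin)
    -- coordinates j ≠ 0
    have hcoordj : ∀ j : Fin (m + 1), j ≠ 0 →
        |Tmap m θ k I₀ g₀ g J₀ φ t j - Tmap m θ k I₀ g₀ g J₀ ψ t j| ≤
          Real.sqrt 2 * (l j / k j) * d := by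
      intro j hj
      have hintφ := expInt_integrable (hk j) (hmeasj φ hφ j hj) (fun s => hgbd j hj _) t
      have hintψ := expInt_integrable (hk j) (hmeasj ψ hψ j hj) (fun s => hgbd j hj _) t
      have hdiffmeas : Measurable (fun s => g j (φ s 0 - φ s j) - g j (ψ s 0 - ψ s j)) :=
        (hmeasj φ hφ j hj).sub (hmeasj ψ hψ j hj)
      have hdiffbd : ∀ s, |g j (φ s 0 - φ s j) - g j (ψ s 0 - ψ s j)|
          ≤ Real.sqrt 2 * l j * d := by
        intro s
        have h1 := hglip j hj (φ s 0 - φ s j) (ψ s 0 - ψ s j)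
        have h2 : (φ s 0 - φ s j) - (ψ s 0 - ψ s j)
            = (fun jj => φ s jj - ψ s jj) 0 - (fun jj => φ s jj - ψ s jj) j := by ring
        rw [h2] at h1
        have h3 := abs_sub_le_sqrt_two_eNorm (fun jj => φ s jj - ψ s jj) (Ne.symm hj)
        have h4 := hdist s
        calc |g j (φ s 0 - φ s j) - g j (ψ s 0 - ψ s j)|
            ≤ l j * |(fun jj => φ s jj - ψ s jj) 0 - (fun jj => φ s jj - ψ s jj) j| := h1
        _ ≤ l j * (Real.sqrt 2 * d) := by
            refine mul_le_mul_of_nonneg_left (h3.trans ?_) (hl j)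
            exact mul_le_mul_of_nonneg_left h4 (Real.sqrt_nonneg _)
        _ = Real.sqrt 2 * l j * d := by ring
      have hintdiff := expInt_bound (hk j) hdiffmeas hdiffbd t
      have hIdiff : (∫ s in Set.Iic t, Real.exp (-(k j) * (t - s)) * g j (φ s 0 - φ s j)) -
          (∫ s in Set.Iic t, Real.exp (-(k j) * (t - s)) * g j (ψ s 0 - ψ s j)) =
          ∫ s in Set.Iic t, Real.exp (-(k j) * (t - s)) *
            (g j (φ s 0 - φ s j) - g j (ψ s 0 - ψ s j)) := by
        rw [← MeasureTheory.integral_sub hintφ hintψ]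
        refine MeasureTheory.setIntegral_congr_fun measurableSet_Iic fun s _ => ?_
        ring
      rw [hunfj φ t j hj, hunfj ψ t j hj, hIdiff]
      refine hintdiff.trans (le_of_eq ?_)
      field_simp
    -- assemble
    have hball : ∀ j : Fin (m + 1),
        |Tmap m θ k I₀ g₀ g J₀ φ t j - Tmap m θ k I₀ g₀ g J₀ ψ t j| ≤
        (fun j : Fin (m + 1) => if j = 0 then A₀ * d else Real.sqrt 2 * (l j / k j) * d) j := by
      intro j
      by_cases hj : j = 0
      · subst hj; simpa using hcoord0
      · simp only [if_neg hj]; exact hcoordj j hj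
    have h1 := eNorm_le_sqrt hball
    have h2 : ∑ j : Fin (m + 1),
        ((fun j : Fin (m + 1) => if j = 0 then A₀ * d else Real.sqrt 2 * (l j / k j) * d) j) ^ 2
        = (A₀ * d) ^ 2 + ∑ i : Fin m, (Real.sqrt 2 * (l i.succ / k i.succ) * d) ^ 2 := by
      rw [Fin.sum_univ_succ]
      simp [Fin.succ_ne_zero]
    have h3 : ∑ i : Fin m, (Real.sqrt 2 * (l i.succ / k i.succ) * d) ^ 2
        = 2 * SS * d ^ 2 := by
      have hterm : ∀ i : Fin m, (Real.sqrt 2 * (l i.succ / k i.succ) * d) ^ 2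
          = 2 * ((l i.succ / k i.succ) ^ 2 * d ^ 2) := by
        intro i
        rw [mul_pow, mul_pow, Real.sq_sqrt (by norm_num : (0:ℝ) ≤ 2)]
        ring
      calc ∑ i : Fin m, (Real.sqrt 2 * (l i.succ / k i.succ) * d) ^ 2
          = ∑ i : Fin m, 2 * ((l i.succ / k i.succ) ^ 2 * d ^ 2) :=
            Finset.sum_congr rfl fun i _ => hterm i
      _ = 2 * SS * d ^ 2 := by
          rw [hSSdef, ← Finset.mul_sum, ← Finset.sum_mul]
          ring
    have h4 : (c * d) ^ 2 = 2 * (A₀ ^ 2 + SS) * d ^ 2 := by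
      rw [hcdef, mul_pow, mul_pow, Real.sq_sqrt (by norm_num : (0:ℝ) ≤ 2),
        Real.sq_sqrt (by positivity)]
    have h5 : ∑ j : Fin (m + 1),
        ((fun j : Fin (m + 1) => if j = 0 then A₀ * d else Real.sqrt 2 * (l j / k j) * d) j) ^ 2
        ≤ (c * d) ^ 2 := by
      rw [h2, h3, h4]
      nlinarith [sq_nonneg (A₀ * d)]
    calc eNorm (fun j => Tmap m θ k I₀ g₀ g J₀ φ t j - Tmap m θ k I₀ g₀ g J₀ ψ t j)
        ≤ Real.sqrt (∑ j : Fin (m + 1), ((fun j : Fin (m + 1) =>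
          if j = 0 then A₀ * d else Real.sqrt 2 * (l j / k j) * d) j) ^ 2) := h1
    _ ≤ Real.sqrt ((c * d) ^ 2) := Real.sqrt_le_sqrt h5
    _ = c * d := Real.sqrt_sq (mul_nonneg hc0 hd)
  -- iteration
  set Z : ℝ → Fin (m + 1) → ℝ := fun _ _ => 0 with hZ
  set seq : ℕ → ℝ → Fin (m + 1) → ℝ := fun n => (Tmap m θ k I₀ g₀ g J₀)^[n] Z with hseqdef
  have hseq0 : seq 0 = Z := rfl
  have hseq_succ : ∀ n, seq (n + 1) = Tmap m θ k I₀ g₀ g J₀ (seq n) := by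
    intro n
    simp only [hseqdef]
    exact Function.iterate_succ_apply' _ _ _
  have hseq_meas : ∀ n, Measurable (seq n) := by
    intro n
    induction n with
    | zero => rw [hseq0]; exact measurable_const
    | succ n ih => rw [hseq_succ]; exact hTmeas _ ih
  -- uniform bound on Tmap φ
  set B : Fin (m + 1) → ℝ := fun j => if j = 0 then
      mc 0 / k 0 + (I₀ + mJ) * Real.exp (k 0 * ω) / (1 - Real.exp (-(k 0) * ω))
    else mc j / k j with hBdef
  set M : ℝ := Real.sqrt (∑ j, B j ^ 2) with hMdef
  have hM0 : 0 ≤ M := Real.sqrt_nonneg _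
  have hTM : ∀ φ : ℝ → Fin (m + 1) → ℝ, Measurable φ → ∀ t,
      eNorm (Tmap m θ k I₀ g₀ g J₀ φ t) ≤ M := by
    intro φ hφ t
    rw [hMdef]
    refine eNorm_le_sqrt fun j => ?_
    by_cases hj : j = 0
    · subst hj
      simp only [hBdef, if_pos]
      exact (hTbd φ hφ t).1
    · simp only [hBdef, if_neg hj]
      exact (hTbd φ hφ t).2 j hj
  have hgap : ∀ n, ∀ t, eNorm (fun j => seq (n + 1) t j - seq n t j) ≤ M * c ^ n := by
    intro n
    induction n with
    | zero =>
      intro t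
      have he : (fun j => seq 1 t j - seq 0 t j) = Tmap m θ k I₀ g₀ g J₀ Z t := by
        funext j
        rw [hseq_succ 0, hseq0]
        simp [hZ]
      rw [he]
      simpa using hTM Z measurable_const t
    | succ n ih =>
      intro t
      have h := hcontr (seq (n + 1)) (seq n) (hseq_meas _) (hseq_meas _)
        (M * c ^ n) (mul_nonneg hM0 (pow_nonneg hc0 n)) ih t
      rw [← hseq_succ (n + 1), ← hseq_succ n] at h
      exact h.trans (le_of_eq (by ring))
  have hstep : ∀ t n, dist (seq n t) (seq (n + 1) t) ≤ M * c ^ n := by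
    intro t n
    have h1 := norm_le_eNorm (n := m + 1) (fun j => seq n t j - seq (n + 1) t j)
    have h2 : dist (seq n t) (seq (n + 1) t)
        = ‖(fun j => seq n t j - seq (n + 1) t j : Fin (m + 1) → ℝ)‖ := by
      rw [dist_eq_norm]; rfl
    rw [h2]
    exact h1.trans ((eNorm_sub_comm _ _).trans_le (hgap n t))
  have hcauchy : ∀ t, CauchySeq fun n => seq n t := fun t =>
    cauchySeq_of_le_geometric c M hc1 (hstep t)
  choose ξ hξ using fun t => cauchySeq_tendsto_of_complete (hcauchy t)
  have hrate : ∀ n t, dist (seq n t) (ξ t) ≤ M * c ^ n / (1 - c) := fun n t =>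
    dist_le_of_le_geometric_of_tendsto c M hc1 (hstep t) (hξ t) n
  set K : ℝ := Real.sqrt ((m + 1 : ℕ) : ℝ) * (M / (1 - c)) with hKdef
  have hK0 : 0 ≤ K := by
    rw [hKdef]
    have : (0:ℝ) < 1 - c := by linarith
    exact mul_nonneg (Real.sqrt_nonneg _) (div_nonneg hM0 this.le)
  have hrate' : ∀ n t, eNorm (fun j => seq n t j - ξ t j) ≤ K * c ^ n := by
    intro n t
    calc eNorm (fun j => seq n t j - ξ t j)
        ≤ Real.sqrt ((m + 1 : ℕ) : ℝ) * ‖seq n t - ξ t‖ := eNorm_le_card_norm _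
    _ = Real.sqrt ((m + 1 : ℕ) : ℝ) * dist (seq n t) (ξ t) := by rw [dist_eq_norm]
    _ ≤ Real.sqrt ((m + 1 : ℕ) : ℝ) * (M * c ^ n / (1 - c)) :=
        mul_le_mul_of_nonneg_left (hrate n t) (Real.sqrt_nonneg _)
    _ = K * c ^ n := by rw [hKdef]; ring
  have hξmeas : Measurable ξ :=
    measurable_of_tendsto_metrizable hseq_meas (tendsto_pi_nhds.2 hξ)
  have hξbd : ∀ t, eNorm (ξ t) ≤ K := by
    intro t
    have h0 := hrate' 0 t
    have h1 : eNorm (ξ t) = eNorm (fun j => ξ t j - seq 0 t j) := by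
      congr 1
      funext j
      rw [hseq0]
      simp [hZ]
    rw [h1, eNorm_sub_comm]
    exact h0.trans (le_of_eq (by ring))
  have hfix : ∀ t, ξ t = Tmap m θ k I₀ g₀ g J₀ ξ t := by
    intro t
    have hzero : eNorm (fun j => ξ t j - Tmap m θ k I₀ g₀ g J₀ ξ t j) = 0 := by
      have hb : ∀ n : ℕ, eNorm (fun j => ξ t j - Tmap m θ k I₀ g₀ g J₀ ξ t j)
          ≤ (K * c + c * K) * c ^ n := by
        intro n
        have h1 := eNorm_sub_triangle (ξ t) (seq (n + 1) t) (Tmap m θ k I₀ g₀ g J₀ ξ t)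
        have h2 : eNorm (fun j => ξ t j - seq (n + 1) t j) ≤ K * c ^ (n + 1) := by
          rw [eNorm_sub_comm]
          exact hrate' (n + 1) t
        have h3 : eNorm (fun j => seq (n + 1) t j - Tmap m θ k I₀ g₀ g J₀ ξ t j)
            ≤ c * (K * c ^ n) := by
          have h4 := hcontr (seq n) ξ (hseq_meas n) hξmeas (K * c ^ n)
            (mul_nonneg hK0 (pow_nonneg hc0 n)) (fun s => hrate' n s) t
          rw [← hseq_succ n] at h4
          exact h4
        have he : K * c ^ (n + 1) + c * (K * c ^ n) = (K * c + c * K) * c ^ n := by ring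
        linarith
      have hlim : Filter.Tendsto (fun n : ℕ => (K * c + c * K) * c ^ n)
          Filter.atTop (nhds 0) := by
        have hp := tendsto_pow_atTop_nhds_zero_of_lt_one hc0 hc1
        simpa using hp.const_mul (K * c + c * K)
      have hle : eNorm (fun j => ξ t j - Tmap m θ k I₀ g₀ g J₀ ξ t j) ≤ 0 :=
        ge_of_tendsto hlim (Filter.Eventually.of_forall hb)
      exact le_antisymm hle (eNorm_nonneg _)
    funext j
    have := eNorm_eq_zero hzero j
    linarith [this]
  refine ⟨ξ, ⟨hξmeas, ⟨K, hξbd⟩, hfix⟩, ?_, ?_⟩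
  · refine ⟨hξmeas, ⟨K, hξbd⟩, fun t => ?_⟩
    have h := hTbd ξ hξmeas t
    rw [hfix t]
    exact ⟨h.1, h.2⟩
  · rintro ζ ⟨hζmeas, ⟨Bζ, hζbd⟩, hζfix⟩
    have hd0 : ∀ t, eNorm (fun j => ζ t j - ξ t j) ≤ Bζ + K := fun t =>
      (eNorm_sub_le_add _ _).trans (add_le_add (hζbd t) (hξbd t))
    have hBK0 : 0 ≤ Bζ + K := le_trans (eNorm_nonneg _) (hd0 0)
    have hiter : ∀ n : ℕ, ∀ t, eNorm (fun j => ζ t j - ξ t j) ≤ c ^ n * (Bζ + K) := by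
      intro n
      induction n with
      | zero => intro t; simpa using hd0 t
      | succ n ih =>
        intro t
        have h1 := hcontr ζ ξ hζmeas hξmeas (c ^ n * (Bζ + K))
          (mul_nonneg (pow_nonneg hc0 n) hBK0) ih t
        rw [← hζfix t, ← hfix t] at h1
        exact h1.trans (le_of_eq (by ring))
    funext t j
    have hlim : Filter.Tendsto (fun n : ℕ => c ^ n * (Bζ + K)) Filter.atTop (nhds 0) := by
      have hp := tendsto_pow_atTop_nhds_zero_of_lt_one hc0 hc1
      simpa using hp.mul_const (Bζ + K)
    have hz : eNorm (fun j => ζ t j - ξ t j) ≤ 0 :=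
      ge_of_tendsto hlim (Filter.Eventually.of_forall fun n => hiter n t)
    have := eNorm_eq_zero (le_antisymm hz (eNorm_nonneg _)) j
    linarith [this]
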